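/- (Irrelevance of never-chosen alternatives' consideration in the ARC model) Fix utilities u : Fin D → ℝ and consideration probabilities α : Fin D → ℝ with 0 ≤ α k ≤ 1 for all k, and define p_k(α) = α k · ∏_{k' : u k' > u k} (1 − α k'). Suppose there are alternatives l and m with α m = 1 and u m > u l. Then for every α' : Fin D → [0,1] that agrees with α at every coordinate other than l, and for every alternative k, p_k(α') = p_k(α). -/
import Mathlib

/-- In the ARC model, the consideration probability of a never-chosen alternative `l`
(one that is dominated by an always-considered alternative `m`) is irrelevant: changing
`α` at coordinate `l` leaves every choice probability unchanged. -/
theorem arc_never_chosen_irrelevant (D : ℕ) (u : Fin D → ℝ) (α α' : Fin D → ℝ)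
    (hα : ∀ k, 0 ≤ α k ∧ α k ≤ 1) (hα' : ∀ k, 0 ≤ α' k ∧ α' k ≤ 1)
    (l m : Fin D) (hm : α m = 1) (hml : u m > u l)
    (hagree : ∀ k, k ≠ l → α' k = α k) :
    ∀ k : Fin D,
      α' k * ∏ k' ∈ Finset.univ.filter (fun k' => u k' > u k), (1 - α' k') =
      α k * ∏ k' ∈ Finset.univ.filter (fun k' => u k' > u k), (1 - α k') := by
  intro k
  have hmne : m ≠ l := by
    intro h; rw [h] at hml; exact lt_irrefl _ hml
  have hα'm : α' m = 1 := by rw [hagree m hmne, hm]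
  by_cases hk : k = l
  · subst hk
    have hmem : m ∈ Finset.univ.filter (fun k' => u k' > u k) := by
      simp [hml]
    rw [Finset.prod_eq_zero hmem (by rw [hα'm]; ring),
        Finset.prod_eq_zero hmem (by rw [hm]; ring)]
    ring
  · rw [hagree k hk]
    by_cases hl : u l > u k
    · have hmem : m ∈ Finset.univ.filter (fun k' => u k' > u k) := by
        simp [lt_trans hl hml]
      rw [Finset.prod_eq_zero hmem (by rw [hα'm]; ring),
          Finset.prod_eq_zero hmem (by rw [hm]; ring)]
    · congr 1
      apply Finset.prod_congr rfl
      intro x hx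
      simp only [Finset.mem_filter] at hx
      have hxl : x ≠ l := by rintro rfl; exact hl hx.2
      rw [hagree x hxl]
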